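/- There is an absolute constant c > 0 (one may take c = 1/8000) such that the following holds. Let B₁, B₂ ⊆ B_{ℂ²}(0,1) be balls of radius 0.01 whose centers are at distance 1.2 from each other. Let p⃗₁ = (x₁,y₁), p⃗₃ = (x₃,y₃) with p⃗₁ ∈ B₁, p⃗₃ ∈ B₂, and p⃗₂ = (x₂,y₂), p⃗₄ = (x₄,y₄) with p⃗₂ ∈ B₂, p⃗₄ ∈ B₁. Define v := ((y₁−y₃)/2, −(x₁−x₃)/2, 1) and w := ((y₂−y₄)/2, −(x₂−x₄)/2, 1) in ℂ³. Then |⟨v, w⟩| ≤ (1 − c)·‖v‖·‖w‖; equivalently, the angle arccos(|⟨v,w⟩|/(‖v‖‖w‖)) between the auxiliary lines l_{p⃗₁,p⃗₃} and l_{p⃗₂,p⃗₄} is bounded below by an absolute positive constant. -/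

import Mathlib

open Metric
open scoped Classical

noncomputable section

/-- `ℂⁿ` with its Euclidean (Hermitian) metric. -/
abbrev Cspace (n : ℕ) := EuclideanSpace ℂ (Fin n)

/-- The point of `ℂ³` with coordinates `(a, b, c)`. -/
def pt3 (a b c : ℂ) : Cspace 3 :=
  WithLp.toLp 2 (fun i : Fin 3 => if i = 0 then a else if i = 1 then b else c)

/-- The auxiliary complex line `l_{p₁,p₂} ⊆ ℂ³` associated to `p₁, p₂ ∈ ℂ²`. -/
def auxLine (p₁ p₂ : Cspace 2) : Set (Cspace 3) :=
  {w | ∃ z : ℂ, w = pt3 ((p₁ 0 + p₂ 0) / 2 + z * (p₁ 1 - p₂ 1) / 2)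
      ((p₁ 1 + p₂ 1) / 2 - z * (p₁ 0 - p₂ 0) / 2) z}

/-- The tube `T_{q₁,q₂} ⊆ ℂ³` associated to the `δ`-balls `q₁, q₂ ⊆ ℂ²` with centres
`c₁, c₂`: the union of the auxiliary lines over pairs of points of the balls, intersected
with `B_{ℂ³}(0,1)`. -/
def TT (δ : ℝ) (c₁ c₂ : Cspace 2) : Set (Cspace 3) :=
  (⋃ p₁ ∈ closedBall c₁ δ, ⋃ p₂ ∈ closedBall c₂ δ, auxLine p₁ p₂) ∩
    closedBall (0 : Cspace 3) 1

/-- The open line segment `{z • u + t : z ∈ ℂ, |z| < l/2}` in `ℂ³`. -/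
def segC3 (u t : Cspace 3) (l : ℝ) : Set (Cspace 3) :=
  {x | ∃ z : ℂ, ‖z‖ < l / 2 ∧ x = z • u + t}

/-- The complex tube of length `l` and radius `r` in `ℂ³`: the closed `r`-neighbourhood of
the segment `{z • u + t : |z| < l/2}` in the Euclidean metric of `ℂ³ ≅ ℝ⁶`. -/
def tubeC3 (u t : Cspace 3) (l r : ℝ) : Set (Cspace 3) :=
  cthickening r (segC3 u t l)

/-- The direction vector `((y₁ - y₂)/2, -(x₁ - x₂)/2, 1) ∈ ℂ³` of the auxiliary line
`l_{p₁,p₂}`. -/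
def auxDir (p₁ p₂ : Cspace 2) : Cspace 3 :=
  pt3 ((p₁ 1 - p₂ 1) / 2) (-(p₁ 0 - p₂ 0) / 2) 1

set_option maxHeartbeats 1000000

lemma inner_auxDir (p₁ p₃ p₂ p₄ : Cspace 2) :
    (inner ℂ (auxDir p₁ p₃) (auxDir p₂ p₄) : ℂ)
      = (inner ℂ (p₁ - p₃) (p₂ - p₄) : ℂ) / 4 + 1 := by
  simp [auxDir, pt3, PiLp.inner_apply, RCLike.inner_apply, Fin.sum_univ_three,
    Fin.sum_univ_two, map_sub, map_neg, map_div₀, map_ofNat]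
  ring

lemma norm_auxDir_sq (p q : Cspace 2) : ‖auxDir p q‖ ^ 2 = ‖p - q‖ ^ 2 / 4 + 1 := by
  rw [EuclideanSpace.norm_eq, EuclideanSpace.norm_eq,
    Real.sq_sqrt (by positivity), Real.sq_sqrt (by positivity)]
  simp [auxDir, pt3, Fin.sum_univ_three, Fin.sum_univ_two, norm_div, norm_neg]
  ring_nf
  rw [neg_add_eq_sub, norm_sub_rev (q 0) (p 0)]

/-- the angle between the auxiliary lines `l_{p₁,p₃}` and `l_{p₂,p₄}` is
bounded below by an absolute positive constant (one may take `c = 1/8000`). -/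
theorem statement13 :
    ∃ c : ℝ, 0 < c ∧
      ∀ b₁ b₂ : Cspace 2,
        closedBall b₁ 0.01 ⊆ closedBall (0 : Cspace 2) 1 →
        closedBall b₂ 0.01 ⊆ closedBall (0 : Cspace 2) 1 →
        dist b₁ b₂ = 1.2 →
      ∀ p₁ p₂ p₃ p₄ : Cspace 2,
        p₁ ∈ closedBall b₁ 0.01 → p₄ ∈ closedBall b₁ 0.01 →
        p₂ ∈ closedBall b₂ 0.01 → p₃ ∈ closedBall b₂ 0.01 →
        ‖(inner ℂ (auxDir p₁ p₃) (auxDir p₂ p₄) : ℂ)‖ ≤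
          (1 - c) * ‖auxDir p₁ p₃‖ * ‖auxDir p₂ p₄‖ := by
  refine ⟨1/8000, by norm_num, ?_⟩
  intro b₁ b₂ _ _ hdist p₁ p₂ p₃ p₄ h1 h4 h2 h3
  have hd : ‖b₁ - b₂‖ = 1.2 := by rw [← dist_eq_norm]; exact hdist
  have h1' : ‖p₁ - b₁‖ ≤ 0.01 := by rw [← dist_eq_norm]; exact mem_closedBall.mp h1
  have h4' : ‖p₄ - b₁‖ ≤ 0.01 := by rw [← dist_eq_norm]; exact mem_closedBall.mp h4
  have h2' : ‖p₂ - b₂‖ ≤ 0.01 := by rw [← dist_eq_norm]; exact mem_closedBall.mp h2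
  have h3' : ‖p₃ - b₂‖ ≤ 0.01 := by rw [← dist_eq_norm]; exact mem_closedBall.mp h3
  set d : Cspace 2 := b₁ - b₂ with hd_def
  set e₁ : Cspace 2 := (p₁ - b₁) - (p₃ - b₂) with he₁_def
  set e₂ : Cspace 2 := (p₂ - b₂) - (p₄ - b₁) with he₂_def
  have he₁ : ‖e₁‖ ≤ 0.02 := by
    calc ‖e₁‖ ≤ ‖p₁ - b₁‖ + ‖p₃ - b₂‖ := norm_sub_le _ _
    _ ≤ 0.02 := by linarith
  have he₂ : ‖e₂‖ ≤ 0.02 := by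
    calc ‖e₂‖ ≤ ‖p₂ - b₂‖ + ‖p₄ - b₁‖ := norm_sub_le _ _
    _ ≤ 0.02 := by linarith
  have hu₁ : p₁ - p₃ = d + e₁ := by rw [hd_def, he₁_def]; abel
  have hu₂ : p₂ - p₄ = -d + e₂ := by rw [hd_def, he₂_def]; abel
  have hdd : (inner ℂ d d : ℂ) = ((1.44 : ℝ) : ℂ) := by
    rw [inner_self_eq_norm_sq_to_K, hd]; norm_num
  have hX : (inner ℂ (auxDir p₁ p₃) (auxDir p₂ p₄) : ℂ)
      = ((1 - 1.44 / 4 : ℝ) : ℂ)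
        + ((inner ℂ d e₂ : ℂ) - (inner ℂ e₁ d : ℂ) + (inner ℂ e₁ e₂ : ℂ)) / 4 := by
    rw [inner_auxDir, hu₁, hu₂, inner_add_left, inner_add_right, inner_add_right,
      inner_neg_right, inner_neg_right, hdd]
    push_cast
    ring
  have hz : ‖(inner ℂ d e₂ : ℂ) - (inner ℂ e₁ d : ℂ) + (inner ℂ e₁ e₂ : ℂ)‖ ≤ 0.0484 := by
    have c1 : ‖(inner ℂ d e₂ : ℂ)‖ ≤ 1.2 * 0.02 := by
      calc ‖(inner ℂ d e₂ : ℂ)‖ ≤ ‖d‖ * ‖e₂‖ := norm_inner_le_norm d e₂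
      _ ≤ 1.2 * 0.02 := by rw [hd]; exact mul_le_mul_of_nonneg_left he₂ (by norm_num)
    have c2 : ‖(inner ℂ e₁ d : ℂ)‖ ≤ 0.02 * 1.2 := by
      calc ‖(inner ℂ e₁ d : ℂ)‖ ≤ ‖e₁‖ * ‖d‖ := norm_inner_le_norm e₁ d
      _ ≤ 0.02 * 1.2 := by rw [hd]; exact mul_le_mul_of_nonneg_right he₁ (by norm_num)
    have c3 : ‖(inner ℂ e₁ e₂ : ℂ)‖ ≤ 0.02 * 0.02 := by
      calc ‖(inner ℂ e₁ e₂ : ℂ)‖ ≤ ‖e₁‖ * ‖e₂‖ := norm_inner_le_norm e₁ e₂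
      _ ≤ 0.02 * 0.02 := mul_le_mul he₁ he₂ (norm_nonneg _) (by norm_num)
    calc ‖(inner ℂ d e₂ : ℂ) - (inner ℂ e₁ d : ℂ) + (inner ℂ e₁ e₂ : ℂ)‖
        ≤ ‖(inner ℂ d e₂ : ℂ) - (inner ℂ e₁ d : ℂ)‖ + ‖(inner ℂ e₁ e₂ : ℂ)‖ := norm_add_le _ _
      _ ≤ ‖(inner ℂ d e₂ : ℂ)‖ + ‖(inner ℂ e₁ d : ℂ)‖ + ‖(inner ℂ e₁ e₂ : ℂ)‖ := by
          have := norm_sub_le (inner ℂ d e₂ : ℂ) (inner ℂ e₁ d : ℂ); linarith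
      _ ≤ 0.0484 := by linarith
  have key : ‖(inner ℂ (auxDir p₁ p₃) (auxDir p₂ p₄) : ℂ)‖ ≤ 0.66 := by
    rw [hX]
    calc ‖((1 - 1.44 / 4 : ℝ) : ℂ)
        + ((inner ℂ d e₂ : ℂ) - (inner ℂ e₁ d : ℂ) + (inner ℂ e₁ e₂ : ℂ)) / 4‖
        ≤ ‖((1 - 1.44 / 4 : ℝ) : ℂ)‖
          + ‖(inner ℂ d e₂ : ℂ) - (inner ℂ e₁ d : ℂ) + (inner ℂ e₁ e₂ : ℂ)‖ / 4 := by
          have := norm_add_le ((( 1 - 1.44 / 4 : ℝ) : ℂ))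
            (((inner ℂ d e₂ : ℂ) - (inner ℂ e₁ d : ℂ) + (inner ℂ e₁ e₂ : ℂ)) / 4)
          simpa [norm_div] using this
      _ ≤ 0.66 := by
          rw [Complex.norm_real, Real.norm_eq_abs,
            show |1 - (1.44 : ℝ) / 4| = 0.64 by norm_num]
          linarith
  have hn1 : (1.18 : ℝ) ≤ ‖p₁ - p₃‖ := by
    have h := norm_sub_le (d + e₁) e₁
    simp only [add_sub_cancel_right] at h
    rw [hu₁]; rw [hd] at h; linarith
  have hn2 : (1.18 : ℝ) ≤ ‖p₂ - p₄‖ := by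
    have h := norm_sub_le (-d + e₂) e₂
    simp only [add_sub_cancel_right, norm_neg] at h
    rw [hu₂]; rw [hd] at h; linarith
  have hv : (1.16 : ℝ) ≤ ‖auxDir p₁ p₃‖ := by
    have hsq := norm_auxDir_sq p₁ p₃
    nlinarith [norm_nonneg (auxDir p₁ p₃), norm_nonneg (p₁ - p₃)]
  have hw : (1.16 : ℝ) ≤ ‖auxDir p₂ p₄‖ := by
    have hsq := norm_auxDir_sq p₂ p₄
    nlinarith [norm_nonneg (auxDir p₂ p₄), norm_nonneg (p₂ - p₄)]
  have hvw : (1.16 : ℝ) * 1.16 ≤ ‖auxDir p₁ p₃‖ * ‖auxDir p₂ p₄‖ :=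
    mul_le_mul hv hw (by norm_num) (norm_nonneg _)
  calc ‖(inner ℂ (auxDir p₁ p₃) (auxDir p₂ p₄) : ℂ)‖ ≤ 0.66 := key
    _ ≤ (1 - 1/8000) * (1.16 * 1.16) := by norm_num
    _ ≤ (1 - 1/8000) * (‖auxDir p₁ p₃‖ * ‖auxDir p₂ p₄‖) :=
        mul_le_mul_of_nonneg_left hvw (by norm_num)
    _ = (1 - 1/8000) * ‖auxDir p₁ p₃‖ * ‖auxDir p₂ p₄‖ := by ring
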